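/- arXiv:2412.13521 — 4 statements merged into one kernel-verified Lean document; each statement's English description precedes it below -/
import Mathlib

section
/- Let H(z₁,…,zₙ) = h(z₁, z₂ - z₁², …, ∑_{j=0}^{n} C(n,j)(-1)^j z₁^j z_{n-j}) where h is twice continuously differentiable. Then with the convention z₀ = 1, ∑_{i=1}^{n} ∑_{j=1}^{n} i·j·H_{z_i z_j}(z⃗)·z_{i-1}·z_{j-1} = h_{z₁z₁} - ∑_{k=2}^{n} k(k-1) h_{z_k} ∑_{i=0}^{k-2} C(k-2,i)(-1)^{k-2-i} z₁^{k-2-i} z_i, where the partial derivatives of h are evaluated at the transformed arguments. -/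
open Finset
open Fin.NatCast

lemma chooseStep (m i : ℕ) (hm : 1 ≤ m) :
    m.choose i * (m - i) = m * Nat.choose (m - 1) i := by
  have h1 := Nat.choose_succ_right_eq m i
  have h2 := Nat.add_one_mul_choose_eq (m - 1) i
  simp only [Nat.succ_eq_add_one, Nat.sub_add_cancel hm] at h2
  omega

lemma chooseTwo (k i : ℕ) (hk : 2 ≤ k) :
    k.choose i * ((k - i) * (k - i - 1)) = k * ((k - 1) * Nat.choose (k - 2) i) := by
  have h1 := chooseStep k i (by omega)
  have h2 := chooseStep (k - 1) i (by omega)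
  have e1 : k - 1 - i = k - i - 1 := by omega
  have e2 : k - 1 - 1 = k - 2 := by omega
  rw [e1, e2] at h2
  calc k.choose i * ((k - i) * (k - i - 1)) = (k.choose i * (k - i)) * (k - i - 1) := by ring
    _ = k * ((k-1).choose i * (k - i - 1)) := by rw [h1]; ring
    _ = k * ((k - 1) * Nat.choose (k - 2) i) := by rw [h2]

-- Lemma A : first-derivative vanishing identity
lemma lemA (k : ℕ) (hk : 2 ≤ k) (x : ℝ) (a : ℕ → ℝ) (ha : a 0 = 1) :
    ∑ j ∈ range (k + 1), ((k.choose j : ℝ) * (-1) ^ j) *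
      ((j : ℝ) * x ^ (j - 1) * a (k - j) + ((k - j : ℕ) : ℝ) * x ^ j * a (k - j - 1)) = 0 := by
  have hsplit : ∀ j, ((k.choose j : ℝ) * (-1) ^ j) *
      ((j : ℝ) * x ^ (j - 1) * a (k - j) + ((k - j : ℕ) : ℝ) * x ^ j * a (k - j - 1))
      = ((k.choose j : ℝ) * (-1) ^ j) * ((j : ℝ) * x ^ (j - 1) * a (k - j))
        + ((k.choose j : ℝ) * (-1) ^ j) * (((k - j : ℕ) : ℝ) * x ^ j * a (k - j - 1)) :=
    fun j => by ring
  simp only [hsplit]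
  rw [Finset.sum_add_distrib]
  have hA : ∑ j ∈ range (k + 1), ((k.choose j : ℝ) * (-1) ^ j) * ((j : ℝ) * x ^ (j - 1) * a (k - j))
      = ∑ j ∈ range k, ((k.choose (j+1) : ℝ) * (-1) ^ (j+1)) * (((j:ℝ)+1) * x ^ j * a (k - j - 1)) := by
    rw [Finset.sum_range_succ']
    simp only [Nat.cast_zero, zero_mul, mul_zero, add_zero, Nat.add_sub_cancel]
    apply Finset.sum_congr rfl
    intro j hj
    push_cast
    have : k - (j+1) = k - j - 1 := by omega
    rw [this]
  have hB : ∑ j ∈ range (k + 1), ((k.choose j : ℝ) * (-1) ^ j) * (((k - j : ℕ) : ℝ) * x ^ j * a (k - j - 1))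
      = ∑ j ∈ range k, ((k.choose j : ℝ) * (-1) ^ j) * (((k - j : ℕ) : ℝ) * x ^ j * a (k - j - 1)) := by
    rw [Finset.sum_range_succ]
    simp
  rw [hA, hB, ← Finset.sum_add_distrib]
  apply Finset.sum_eq_zero
  intro j hj
  simp only [mem_range] at hj
  have hc : ((k.choose (j+1) : ℝ)) * ((j:ℝ)+1) = (k.choose j : ℝ) * ((k - j : ℕ) : ℝ) := by
    exact_mod_cast congrArg (Nat.cast (R := ℝ)) (Nat.choose_succ_right_eq k j)
  have hs : ((-1:ℝ)) ^ (j+1) = -(-1)^j := by rw [pow_succ]; ring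
  rw [hs]
  linear_combination (-(-1:ℝ)^j * x ^ j * a (k - j - 1)) * hc

-- Lemma B : second-derivative identity
lemma lemB (k : ℕ) (hk : 2 ≤ k) (x : ℝ) (a : ℕ → ℝ) :
    ∑ j ∈ range (k + 1), ((k.choose j : ℝ) * (-1) ^ j) *
      ((j : ℝ) * ((j - 1 : ℕ) : ℝ) * x ^ (j - 2) * a (k - j)
        + 2 * (j : ℝ) * ((k - j : ℕ) : ℝ) * x ^ (j - 1) * a (k - j - 1))
    = -((k : ℝ) * ((k : ℝ) - 1)) * ∑ i ∈ range (k - 1),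
        ((k - 2).choose i : ℝ) * (-1) ^ (k - 2 - i) * x ^ (k - 2 - i) * a i := by
  set P : ℕ → ℝ := fun j => ((k.choose j : ℝ) * (-1) ^ j) *
      ((j : ℝ) * ((j - 1 : ℕ) : ℝ) * x ^ (j - 2) * a (k - j)) with hP
  set Q : ℕ → ℝ := fun j => ((k.choose j : ℝ) * (-1) ^ j) *
      (2 * (j : ℝ) * ((k - j : ℕ) : ℝ) * x ^ (j - 1) * a (k - j - 1)) with hQ
  have hsplit : ∀ j ∈ range (k+1), ((k.choose j : ℝ) * (-1) ^ j) *
      ((j : ℝ) * ((j - 1 : ℕ) : ℝ) * x ^ (j - 2) * a (k - j)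
        + 2 * (j : ℝ) * ((k - j : ℕ) : ℝ) * x ^ (j - 1) * a (k - j - 1)) = P j + Q j :=
    fun j _ => by rw [hP, hQ]; ring
  rw [Finset.sum_congr rfl hsplit, Finset.sum_add_distrib]
  have hQ2 : ∑ j ∈ range (k + 1), Q j = ∑ j ∈ range k, (-2) * P (j+1) := by
    rw [Finset.sum_range_succ]
    have : Q k = 0 := by simp [hQ]
    rw [this, add_zero]
    apply Finset.sum_congr rfl
    intro j hj
    simp only [mem_range] at hj
    have hc : ((k.choose (j+1) : ℝ)) * ((j:ℝ)+1) = (k.choose j : ℝ) * ((k - j : ℕ) : ℝ) := by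
      exact_mod_cast congrArg (Nat.cast (R := ℝ)) (Nat.choose_succ_right_eq k j)
    simp only [hP, hQ]
    have e1 : (j + 1) - 1 = j := by omega
    have e2 : (j + 1) - 2 = j - 1 := by omega
    have e3 : k - (j + 1) = k - j - 1 := by omega
    rw [e1, e2, e3]
    have hs : ((-1:ℝ)) ^ (j+1) = -(-1)^j := by rw [pow_succ]; ring
    rw [hs]
    push_cast
    linear_combination (-2 * (j:ℝ) * x ^ (j-1) * a (k - j - 1) * (-1)^j) * hc
  have hP0 : ∑ j ∈ range (k + 1), P j = ∑ j ∈ range k, P (j+1) := by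
    rw [Finset.sum_range_succ']
    simp [hP]
  have htot : ∑ j ∈ range (k + 1), P j + ∑ j ∈ range (k + 1), Q j
      = -∑ j ∈ range (k + 1), P j := by
    rw [hQ2, hP0, ← Finset.sum_add_distrib, ← Finset.sum_neg_distrib]
    apply Finset.sum_congr rfl
    intro j _
    ring
  rw [htot]
  have hrefl : ∑ j ∈ range (k + 1), P j = ∑ i ∈ range (k + 1), P (k - i) := by
    rw [← Finset.sum_range_reflect]
    apply Finset.sum_congr rfl
    intro i _
    have e : k + 1 - 1 - i = k - i := by omega
    rw [e]
  rw [hrefl]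
  have hk1 : k + 1 = (k - 1) + 1 + 1 := by omega
  rw [hk1, Finset.sum_range_succ, Finset.sum_range_succ]
  have hz1 : P (k - (k - 1)) = 0 := by
    have : k - (k - 1) = 1 := by omega
    rw [this]; simp [hP]
  have hz2 : P (k - (k - 1 + 1)) = 0 := by
    have : k - (k - 1 + 1) = 0 := by omega
    rw [this]; simp [hP]
  rw [hz1, hz2, add_zero, add_zero, neg_mul, neg_inj, Finset.mul_sum]
  apply Finset.sum_congr rfl
  intro i hi
  simp only [mem_range] at hi
  have hik : i ≤ k - 2 := by omega
  simp only [hP]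
  have e1 : k - (k - i) = i := by omega
  have e2 : k - i - 2 = k - 2 - i := by omega
  have e3 : k - i - 1 = k - 1 - i := by omega
  have e4 : Nat.choose k (k - i) = Nat.choose k i := Nat.choose_symm (by omega)
  have e5 : k - i = (k - 2 - i) + 2 := by omega
  rw [e1, e2, e4]
  have hsign : ((-1:ℝ)) ^ (k - i) = (-1) ^ (k - 2 - i) := by
    rw [e5, pow_add]; norm_num
  rw [hsign]
  have hct : ((k.choose i : ℝ)) * (((k-i:ℕ):ℝ) * ((k-i-1:ℕ):ℝ))
      = (k:ℝ) * (((k-1:ℕ):ℝ) * (((k-2).choose i : ℕ) : ℝ)) := by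
    exact_mod_cast congrArg (Nat.cast (R := ℝ)) (chooseTwo k i hk)
  have hcast1 : ((k-1:ℕ):ℝ) = (k:ℝ) - 1 := by
    rw [Nat.cast_sub (by omega)]; norm_num
  have hcast2 : ((k-i:ℕ):ℝ) = (k:ℝ) - i := by rw [Nat.cast_sub (by omega)]
  rw [hcast1] at hct
  linear_combination x ^ (k - 2 - i) * a i * (-1)^(k-2-i) * hct

noncomputable section

abbrev prj (n : ℕ) (i : Fin (n+1)) : (Fin (n+1) → ℝ) →L[ℝ] ℝ :=
  ContinuousLinearMap.proj i

def Texp (n : ℕ) (w : Fin (n+1) → ℝ) (k : Fin (n+1)) : ℝ :=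
  if (k : ℕ) ≤ 1 then w k
  else ∑ j ∈ range ((k:ℕ)+1), ((Nat.choose (k:ℕ) j : ℝ) * (-1)^j) *
    (w 1 ^ j * w ((((k:ℕ) - j : ℕ)) : Fin (n+1)))

def Dmap (n : ℕ) (w : Fin (n+1) → ℝ) (k : Fin (n+1)) : (Fin (n+1) → ℝ) →L[ℝ] ℝ :=
  if (k : ℕ) ≤ 1 then prj n k
  else ∑ j ∈ range ((k:ℕ)+1), ((Nat.choose (k:ℕ) j : ℝ) * (-1)^j) •
    (w 1 ^ j • prj n ((((k:ℕ) - j : ℕ)) : Fin (n+1))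
      + w ((((k:ℕ) - j : ℕ)) : Fin (n+1)) • (((j:ℝ) * w 1 ^ (j - 1)) • prj n 1))

lemma hasFDerivAt_pow_coord (n : ℕ) (i : Fin (n+1)) (j : ℕ) (w : Fin (n+1) → ℝ) :
    HasFDerivAt (fun w : Fin (n+1) → ℝ => w i ^ j)
      (((j:ℝ) * w i ^ (j-1)) • prj n i) w :=
  (hasDerivAt_pow j (w i)).comp_hasFDerivAt w (hasFDerivAt_apply i w)

lemma hasFDerivAt_Texp (n : ℕ) (w : Fin (n+1) → ℝ) :
    HasFDerivAt (Texp n) (ContinuousLinearMap.pi (Dmap n w)) w := by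
  apply hasFDerivAt_pi.2
  intro k
  unfold Texp Dmap
  split_ifs with hk
  · exact hasFDerivAt_apply k w
  · exact HasFDerivAt.fun_sum fun j _ =>
      ((hasFDerivAt_pow_coord n 1 j w).mul (hasFDerivAt_apply _ w)).const_mul _

def Gfun (n : ℕ) (v w : Fin (n+1) → ℝ) (k : Fin (n+1)) : ℝ :=
  if (k : ℕ) ≤ 1 then v k
  else ∑ j ∈ range ((k:ℕ)+1), ((Nat.choose (k:ℕ) j : ℝ) * (-1)^j) *
    (w 1 ^ j * v ((((k:ℕ) - j : ℕ)) : Fin (n+1))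
      + w ((((k:ℕ) - j : ℕ)) : Fin (n+1)) * ((j:ℝ) * w 1 ^ (j - 1) * v 1))

lemma Dmap_apply (n : ℕ) (w v : Fin (n+1) → ℝ) (k : Fin (n+1)) :
    Dmap n w k v = Gfun n v w k := by
  unfold Dmap Gfun
  split_ifs with hk
  · rfl
  · rw [ContinuousLinearMap.sum_apply]
    apply Finset.sum_congr rfl
    intro j _
    simp only [ContinuousLinearMap.smul_apply, ContinuousLinearMap.add_apply,
      ContinuousLinearMap.proj_apply, smul_eq_mul]

def Dg (n : ℕ) (v z : Fin (n+1) → ℝ) (k : Fin (n+1)) : (Fin (n+1) → ℝ) →L[ℝ] ℝ :=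
  if (k : ℕ) ≤ 1 then 0
  else ∑ j ∈ range ((k:ℕ)+1), ((Nat.choose (k:ℕ) j : ℝ) * (-1)^j) •
    ((v ((((k:ℕ) - j : ℕ)) : Fin (n+1))) • (((j:ℝ) * z 1 ^ (j-1)) • prj n 1)
      + (z ((((k:ℕ) - j : ℕ)) : Fin (n+1)) •
          (v 1 • ((j:ℝ) • ((((j-1:ℕ):ℝ) * z 1 ^ (j-1-1)) • prj n 1)))
        + ((j:ℝ) * z 1 ^ (j-1) * v 1) • prj n ((((k:ℕ) - j : ℕ)) : Fin (n+1))))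

lemma hasFDerivAt_Gfun (n : ℕ) (v z : Fin (n+1) → ℝ) :
    HasFDerivAt (fun w => Gfun n v w) (ContinuousLinearMap.pi (Dg n v z)) z := by
  apply hasFDerivAt_pi.2
  intro k
  unfold Gfun Dg
  split_ifs with hk
  · exact hasFDerivAt_const _ _
  · exact HasFDerivAt.fun_sum fun j _ =>
      (((hasFDerivAt_pow_coord n 1 j z).mul_const _).add
        ((hasFDerivAt_apply _ z).mul
          (((hasFDerivAt_pow_coord n 1 (j-1) z).const_mul ((j:ℝ))).mul_const (v 1)))).const_mul _

lemma contDiff_Texp (n : ℕ) : ContDiff ℝ 2 (Texp n) := by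
  rw [contDiff_pi]
  intro k
  unfold Texp
  split_ifs with hk
  · exact (prj n k).contDiff
  · apply ContDiff.sum
    intro j _
    exact contDiff_const.mul
      (((prj n 1).contDiff.pow j).mul (prj n _).contDiff)


def vv (n : ℕ) (z : Fin (n+1) → ℝ) : Fin (n+1) → ℝ :=
  fun m => ((m : ℕ) : ℝ) * z ((((m : ℕ) - 1 : ℕ)) : Fin (n+1))

lemma vv_cast (n : ℕ) (z : Fin (n+1) → ℝ) (m : ℕ) (hm : m < n + 1) :
    vv n z ((m : Fin (n+1))) = (m : ℝ) * z (((m - 1 : ℕ)) : Fin (n+1)) := by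
  unfold vv
  rw [Fin.val_cast_of_lt hm]

lemma val_one' (n : ℕ) (hn : 2 ≤ n) : ((1 : Fin (n+1)) : ℕ) = 1 := by
  rw [Fin.val_one']
  exact Nat.mod_eq_of_lt (by omega)

lemma vv_one (n : ℕ) (hn : 2 ≤ n) (z : Fin (n+1) → ℝ) (hz0 : z 0 = 1) : vv n z 1 = 1 := by
  unfold vv
  rw [val_one' n hn]
  norm_num
  exact hz0

lemma Gfun_at_z (n : ℕ) (hn : 2 ≤ n) (z : Fin (n+1) → ℝ) (hz0 : z 0 = 1) :
    Gfun n (vv n z) z = Pi.single (1 : Fin (n+1)) 1 := by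
  funext k
  unfold Gfun
  split_ifs with hk
  · rcases Nat.le_one_iff_eq_zero_or_eq_one.1 hk with h0 | h1
    · have hk0 : k = 0 := by
        apply Fin.ext; simp [h0]
      subst hk0
      have h01 : (0 : Fin (n+1)) ≠ 1 := by
        simp only [Fin.ne_iff_vne, val_one' n hn]
        simp
      rw [Pi.single_eq_of_ne h01]
      unfold vv
      simp
    · have hk1 : k = 1 := by
        rw [Fin.ext_iff, val_one' n hn]; exact h1
      subst hk1
      rw [Pi.single_eq_same, vv_one n hn z hz0]
  · have hk2 : 2 ≤ (k : ℕ) := by omega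
    have hne : k ≠ 1 := by
      intro hh; rw [hh, val_one' n hn] at hk2; omega
    rw [Pi.single_eq_of_ne hne]
    have := lemA (k : ℕ) hk2 (z 1) (fun i => z ((i : ℕ) : Fin (n+1))) (by simpa using hz0)
    rw [← this]
    apply Finset.sum_congr rfl
    intro j hj
    simp only [mem_range] at hj
    have hlt : (k : ℕ) - j < n + 1 := by omega
    rw [vv_cast n z _ hlt, vv_one n hn z hz0]
    ring

lemma Dg_apply_v (n : ℕ) (hn : 2 ≤ n) (z : Fin (n+1) → ℝ) (hz0 : z 0 = 1) (k : Fin (n+1)) :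
    Dg n (vv n z) z k (vv n z) = if (k : ℕ) ≤ 1 then 0 else
      -(((k:ℕ):ℝ) * (((k:ℕ):ℝ) - 1)) * ∑ i ∈ range ((k:ℕ) - 1),
        (Nat.choose ((k:ℕ) - 2) i : ℝ) * (-1)^((k:ℕ)-2-i) * z 1 ^ ((k:ℕ)-2-i)
          * z ((i : ℕ) : Fin (n+1)) := by
  unfold Dg
  split_ifs with hk
  · simp
  · have hk2 : 2 ≤ (k : ℕ) := by omega
    rw [ContinuousLinearMap.sum_apply]
    have := lemB (k : ℕ) hk2 (z 1) (fun i => z ((i : ℕ) : Fin (n+1)))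
    rw [← this]
    apply Finset.sum_congr rfl
    intro j hj
    simp only [mem_range] at hj
    simp only [ContinuousLinearMap.smul_apply, ContinuousLinearMap.add_apply,
      ContinuousLinearMap.proj_apply, smul_eq_mul]
    have hlt : (k : ℕ) - j < n + 1 := by omega
    rw [vv_cast n z _ hlt, vv_one n hn z hz0]
    have he : j - 1 - 1 = j - 2 := by omega
    rw [he]
    ring

/-- The second-derivative identity for the raw-moments-to-central-moments change of
variables: with `H = h ∘ T`, `T(z)_k = ∑_{j=0}^k C(k,j)(-1)^j z₁^j z_{k-j}` (k ≥ 2),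
`z₀ = 1`, one has
`∑_{i,j=1}^n i j H_{z_i z_j}(z) z_{i-1} z_{j-1}
  = h_{z₁z₁}(Tz) - ∑_{k=2}^n k(k-1) h_{z_k}(Tz) ∑_{i=0}^{k-2} C(k-2,i)(-1)^{k-2-i} z₁^{k-2-i} z_i`. -/
theorem stmt2 (n : ℕ) (hn : 2 ≤ n)
    (h : (Fin (n + 1) → ℝ) → ℝ) (hh : ContDiff ℝ 2 h)
    (T : (Fin (n + 1) → ℝ) → (Fin (n + 1) → ℝ))
    (hT : ∀ (z : Fin (n + 1) → ℝ) (k : Fin (n + 1)),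
      T z k = if (k : ℕ) ≤ 1 then z k
        else ∑ j ∈ range ((k : ℕ) + 1),
          (Nat.choose (k : ℕ) j : ℝ) * (-1) ^ j * (z 1) ^ j * z ((((k : ℕ) - j : ℕ)) : Fin (n + 1)))
    (H : (Fin (n + 1) → ℝ) → ℝ) (hH : H = h ∘ T)
    (z : Fin (n + 1) → ℝ) (hz0 : z 0 = 1) :
    ∑ i ∈ Icc 1 n, ∑ j ∈ Icc 1 n, (i : ℝ) * (j : ℝ) *
        (fderiv ℝ (fun w => fderiv ℝ H w (Pi.single ((j : ℕ) : Fin (n + 1)) 1)) z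
          (Pi.single ((i : ℕ) : Fin (n + 1)) 1))
        * z (((i - 1 : ℕ)) : Fin (n + 1)) * z (((j - 1 : ℕ)) : Fin (n + 1))
    = fderiv ℝ (fun w => fderiv ℝ h w (Pi.single (1 : Fin (n + 1)) 1)) (T z)
        (Pi.single (1 : Fin (n + 1)) 1)
      - ∑ k ∈ Icc 2 n, (k : ℝ) * ((k : ℝ) - 1) *
          (fderiv ℝ h (T z) (Pi.single ((k : ℕ) : Fin (n + 1)) 1)) *
          ∑ i ∈ range (k - 1), (Nat.choose (k - 2) i : ℝ) * (-1) ^ (k - 2 - i) *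
            (z 1) ^ (k - 2 - i) * z ((i : ℕ) : Fin (n + 1)) := by
  have hTe : T = Texp n := by
    funext w k
    rw [hT, Texp]
    split_ifs with hk
    · rfl
    · exact Finset.sum_congr rfl fun j _ => by ring
  have hTc : ContDiff ℝ 2 T := hTe ▸ contDiff_Texp n
  have hHc : ContDiff ℝ 2 H := hH ▸ hh.comp hTc
  have hT'w : ∀ w, HasFDerivAt T (ContinuousLinearMap.pi (Dmap n w)) w := by
    rw [hTe]; exact hasFDerivAt_Texp n
  have hTdA : ∀ w, DifferentiableAt ℝ T w := fun w => (hT'w w).differentiableAt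
  set v : Fin (n+1) → ℝ := vv n z with hvdef
  have hGw : ∀ w, fderiv ℝ T w v = Gfun n v w := by
    intro w
    rw [(hT'w w).fderiv]
    funext k
    rw [ContinuousLinearMap.pi_apply, Dmap_apply]
  have hhd : Differentiable ℝ h := hh.differentiable (by norm_num)
  have hfh : ContDiff ℝ 1 (fderiv ℝ h) := hh.fderiv_right (by norm_num)
  have hfH : ContDiff ℝ 1 (fderiv ℝ H) := hHc.fderiv_right (by norm_num)
  -- expansion of a CLM applied to a vector over the standard basis
  have hvsum : ∀ (u : Fin (n+1) → ℝ) (L : (Fin (n+1) → ℝ) →L[ℝ] ℝ),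
      L u = ∑ m : Fin (n+1), u m * L (Pi.single m 1) := by
    intro u L
    have hu : u = ∑ m : Fin (n+1), u m • (Pi.single m (1:ℝ) : Fin (n+1) → ℝ) := by
      rw [← Finset.univ_sum_single u]
      apply Finset.sum_congr rfl
      intro m _
      funext j
      simp [Pi.single_apply, mul_ite]
    conv_lhs => rw [hu]
    rw [map_sum]
    exact Finset.sum_congr rfl fun m _ => by rw [map_smul, smul_eq_mul]
  have hFinSum : ∀ S : Fin (n+1) → ℝ,
      ∑ m : Fin (n+1), S m = ∑ a ∈ range (n+1), S ((a : Fin (n+1))) := by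
    intro S
    rw [← Fin.sum_univ_eq_sum_range (fun a => S ((a : Fin (n+1)))) (n+1)]
    exact Finset.sum_congr rfl fun m _ => by rw [Fin.cast_val_eq_self]
  have hdrop1 : ∀ g : ℕ → ℝ, g 0 = 0 → ∑ m ∈ range (n+1), g m = ∑ m ∈ Icc 1 n, g m := by
    intro g hg
    have : range (n + 1) = insert 0 (Icc 1 n) := by
      ext a; simp only [Finset.mem_range, Finset.mem_insert, Finset.mem_Icc]; omega
    rw [this, Finset.sum_insert (by simp), hg, zero_add]
  have hdrop2 : ∀ g : ℕ → ℝ, g 0 = 0 → g 1 = 0 →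
      ∑ m ∈ range (n+1), g m = ∑ m ∈ Icc 2 n, g m := by
    intro g hg0 hg1
    have : range (n + 1) = insert 0 (insert 1 (Icc 2 n)) := by
      ext a; simp only [Finset.mem_range, Finset.mem_insert, Finset.mem_Icc]; omega
    rw [this, Finset.sum_insert (by simp), Finset.sum_insert (by simp), hg0, hg1]
    ring
  have hv0 : v 0 = 0 := by rw [hvdef]; unfold vv; simp
  have hv1 : v 1 = 1 := vv_one n hn z hz0
  -- differentiability of directional-derivative maps of H
  have hdiffH : ∀ u : Fin (n+1) → ℝ, DifferentiableAt ℝ (fun w => fderiv ℝ H w u) z :=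
    fun u => (hfH.differentiable one_ne_zero z).clm_apply (differentiableAt_const _)
  -- Step A : bilinear expansion
  have hstepA : fderiv ℝ (fun w => fderiv ℝ H w v) z v
      = ∑ mj : Fin (n+1), ∑ mi : Fin (n+1), v mj * (v mi *
          fderiv ℝ (fun w => fderiv ℝ H w (Pi.single mj 1)) z (Pi.single mi 1)) := by
    have e1 : (fun w => fderiv ℝ H w v)
        = (fun w => ∑ m : Fin (n+1), v m * fderiv ℝ H w (Pi.single m 1)) :=
      funext fun w => hvsum v (fderiv ℝ H w)
    rw [e1, fderiv_fun_sum (fun m _ => (hdiffH _).const_mul (v m)), ContinuousLinearMap.sum_apply]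
    apply Finset.sum_congr rfl
    intro mj _
    rw [fderiv_const_mul (hdiffH _) (v mj), ContinuousLinearMap.smul_apply, smul_eq_mul,
      hvsum v (fderiv ℝ (fun w => fderiv ℝ H w (Pi.single mj 1)) z), Finset.mul_sum]
  -- Step B : theorem LHS equals the bilinear form
  have hLHS : (∑ i ∈ Icc 1 n, ∑ j ∈ Icc 1 n, (i : ℝ) * (j : ℝ) *
        (fderiv ℝ (fun w => fderiv ℝ H w (Pi.single ((j : ℕ) : Fin (n + 1)) 1)) z
          (Pi.single ((i : ℕ) : Fin (n + 1)) 1))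
        * z (((i - 1 : ℕ)) : Fin (n + 1)) * z (((j - 1 : ℕ)) : Fin (n + 1)))
      = fderiv ℝ (fun w => fderiv ℝ H w v) z v := by
    have hvic : ∀ a ∈ Icc 1 n, v ((a : Fin (n+1))) = (a:ℝ) * z (((a-1:ℕ)) : Fin (n+1)) := by
      intro a ha
      rw [hvdef]
      exact vv_cast n z a (by simp only [mem_Icc] at ha; omega)
    rw [hstepA]
    rw [hFinSum (fun mj => ∑ mi : Fin (n+1), v mj * (v mi *
      fderiv ℝ (fun w => fderiv ℝ H w (Pi.single mj 1)) z (Pi.single mi 1)))]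
    rw [hdrop1 _ (by simp [hv0])]
    rw [Finset.sum_comm]
    apply Finset.sum_congr rfl
    intro a ha
    rw [hFinSum (fun mi => v ((a : Fin (n+1))) * (v mi *
      fderiv ℝ (fun w => fderiv ℝ H w (Pi.single ((a : Fin (n+1))) 1)) z (Pi.single mi 1)))]
    rw [hdrop1 _ (by simp [hv0])]
    apply Finset.sum_congr rfl
    intro b hb
    rw [hvic a ha, hvic b hb]
    ring
  -- Step C : chain rule
  have hstepC : fderiv ℝ (fun w => fderiv ℝ H w v) z v
      = fderiv ℝ (fun w => fderiv ℝ h w (Pi.single (1 : Fin (n + 1)) 1)) (T z)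
          (Pi.single (1 : Fin (n + 1)) 1)
        + fderiv ℝ h (T z) (fderiv ℝ (Gfun n v) z v) := by
    have hcTz : (fun w => fderiv ℝ h (T w)) = (fderiv ℝ h) ∘ T := rfl
    have hdc : DifferentiableAt ℝ (fun w => fderiv ℝ h (T w)) z := by
      rw [hcTz]; exact (hfh.differentiable one_ne_zero (T z)).comp z (hTdA z)
    have hdu : DifferentiableAt ℝ (Gfun n v) z := (hasFDerivAt_Gfun n v z).differentiableAt
    have hGz : Gfun n v z = Pi.single (1 : Fin (n+1)) 1 := by
      rw [hvdef]; exact Gfun_at_z n hn z hz0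
    have e3 : (fun w => fderiv ℝ H w v) = fun w => (fderiv ℝ h (T w)) (Gfun n v w) := by
      funext w
      rw [hH, fderiv_comp w (hhd (T w)) (hTdA w), ContinuousLinearMap.coe_comp',
        Function.comp_apply, hGw w]
    have e4 : fderiv ℝ (fun w => fderiv ℝ h (T w)) z v
        = fderiv ℝ (fderiv ℝ h) (T z) (Pi.single 1 1) := by
      rw [hcTz, fderiv_comp z (hfh.differentiable one_ne_zero (T z)) (hTdA z),
        ContinuousLinearMap.coe_comp', Function.comp_apply, hGw z, hGz]
    have e5 : fderiv ℝ (fun w => fderiv ℝ h w (Pi.single (1 : Fin (n+1)) 1)) (T z)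
          (Pi.single 1 1)
        = (fderiv ℝ (fderiv ℝ h) (T z) (Pi.single 1 1)) (Pi.single 1 1) := by
      rw [fderiv_clm_apply ((hfh.differentiable one_ne_zero) (T z)) (differentiableAt_const _)]
      simp
    rw [e3, fderiv_clm_apply hdc hdu]
    simp only [ContinuousLinearMap.add_apply, ContinuousLinearMap.coe_comp',
      Function.comp_apply, ContinuousLinearMap.flip_apply]
    rw [e4, e5, hGz]
    ring
  -- Step D : second piece equals the k-sum
  have hstepD : fderiv ℝ h (T z) (fderiv ℝ (Gfun n v) z v)
      = - ∑ k ∈ Icc 2 n, (k : ℝ) * ((k : ℝ) - 1) *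
          (fderiv ℝ h (T z) (Pi.single ((k : ℕ) : Fin (n + 1)) 1)) *
          ∑ i ∈ range (k - 1), (Nat.choose (k - 2) i : ℝ) * (-1) ^ (k - 2 - i) *
            (z 1) ^ (k - 2 - i) * z ((i : ℕ) : Fin (n + 1)) := by
    have hfdGv : ∀ m : Fin (n+1), fderiv ℝ (Gfun n v) z v m = Dg n v z m v := by
      intro m
      rw [(hasFDerivAt_Gfun n v z).fderiv, ContinuousLinearMap.pi_apply]
    have hDval : ∀ m : Fin (n+1), Dg n v z m v = if (m : ℕ) ≤ 1 then 0 else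
        -(((m:ℕ):ℝ) * (((m:ℕ):ℝ) - 1)) * ∑ i ∈ range ((m:ℕ) - 1),
          (Nat.choose ((m:ℕ) - 2) i : ℝ) * (-1)^((m:ℕ)-2-i) * z 1 ^ ((m:ℕ)-2-i)
            * z ((i : ℕ) : Fin (n+1)) := by
      intro m
      rw [hvdef]
      exact Dg_apply_v n hn z hz0 m
    rw [hvsum (fderiv ℝ (Gfun n v) z v) (fderiv ℝ h (T z))]
    rw [hFinSum (fun m => (fderiv ℝ (Gfun n v) z v) m * fderiv ℝ h (T z) (Pi.single m 1))]
    have hg0 : fderiv ℝ (Gfun n v) z v ((0 : ℕ) : Fin (n+1)) *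
        fderiv ℝ h (T z) (Pi.single ((0 : ℕ) : Fin (n+1)) 1) = 0 := by
      rw [hfdGv, hDval]
      simp
    have hg1 : fderiv ℝ (Gfun n v) z v ((1 : ℕ) : Fin (n+1)) *
        fderiv ℝ h (T z) (Pi.single ((1 : ℕ) : Fin (n+1)) 1) = 0 := by
      rw [hfdGv, hDval]
      rw [if_pos (by rw [Nat.cast_one, val_one' n hn])]
      simp
    rw [hdrop2 _ hg0 hg1]
    rw [← Finset.sum_neg_distrib]
    apply Finset.sum_congr rfl
    intro k hk
    simp only [mem_Icc] at hk
    rw [hfdGv, hDval]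
    rw [if_neg (by rw [Fin.val_cast_of_lt (by omega : k < n + 1)]; omega)]
    rw [Fin.val_cast_of_lt (by omega : k < n + 1)]
    ring
  rw [hLHS, hstepC, hstepD]
  ring
end
end

section
/- Let f : [0,T] × [0,∞) → ℝ be strictly positive, continuous, and uniformly bounded, such that |f(t,·)|² is locally Lipschitz on bounded intervals, and let D : [0,T] → ℝ be continuous with inf|D| > 0, B : [0,T] → ℝ continuous, κ > 0. Then there is a unique continuous function β : [0,T] → ℝ satisfying the integral equation |D_t|² β_t = κ B_t f(t, ∫_t^T |D_s β_s|² ds) for all t ∈ [0,T]. -/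
open Set

set_option maxHeartbeats 1000000

/-- Existence and uniqueness of a continuous solution `β` of the integral equation
`|D_t|² β_t = κ B_t f(t, ∫_t^T |D_s β_s|² ds)` on `[0,T]`, for strictly positive,
continuous, uniformly bounded `f` whose square is locally Lipschitz. -/
theorem stmt3 (T : ℝ) (hT : 0 < T) (κ : ℝ) (hκ : 0 < κ)
    (B D : ℝ → ℝ) (hB : ContinuousOn B (Icc 0 T)) (hD : ContinuousOn D (Icc 0 T))
    (hDpos : ∃ d > 0, ∀ t ∈ Icc 0 T, d ≤ |D t|)
    (f : ℝ → ℝ → ℝ)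
    (hfpos : ∀ t ∈ Icc 0 T, ∀ y ≥ (0 : ℝ), 0 < f t y)
    (hfcont : ContinuousOn (fun p : ℝ × ℝ => f p.1 p.2) (Icc 0 T ×ˢ Ici 0))
    (hfbdd : ∃ M, ∀ t ∈ Icc 0 T, ∀ y ≥ (0 : ℝ), f t y ≤ M)
    (hLip : ∀ R > (0 : ℝ), ∃ L, ∀ t ∈ Icc 0 T, ∀ y ∈ Icc (0 : ℝ) R, ∀ w ∈ Icc (0 : ℝ) R,
        |(f t y) ^ 2 - (f t w) ^ 2| ≤ L * |y - w|) :
    ∃ β : ℝ → ℝ,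
      (ContinuousOn β (Icc 0 T) ∧
        ∀ t ∈ Icc 0 T, (D t) ^ 2 * β t = κ * B t * f t (∫ s in t..T, (D s * β s) ^ 2)) ∧
      ∀ β' : ℝ → ℝ,
        (ContinuousOn β' (Icc 0 T) ∧
          ∀ t ∈ Icc 0 T, (D t) ^ 2 * β' t = κ * B t * f t (∫ s in t..T, (D s * β' s) ^ 2)) →
        EqOn β β' (Icc 0 T) := by
  classical
  obtain ⟨d, hd0, hd⟩ := hDpos
  obtain ⟨M, hM⟩ := hfbdd
  have h0mem : (0 : ℝ) ∈ Icc (0 : ℝ) T := ⟨le_rfl, hT.le⟩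
  have hM0 : 0 < M := lt_of_lt_of_le (hfpos 0 h0mem 0 le_rfl) (hM 0 h0mem 0 le_rfl)
  obtain ⟨Mb, hMb⟩ := isCompact_Icc.exists_bound_of_continuousOn hB
  have hMb0 : 0 ≤ Mb := (norm_nonneg _).trans (hMb 0 h0mem)
  set C : ℝ := κ ^ 2 * Mb ^ 2 * M ^ 2 / d ^ 2 with hCdef
  have hC0 : 0 ≤ C := by positivity
  set R : ℝ := C * T with hRdef
  have hR0 : 0 ≤ R := mul_nonneg hC0 hT.le
  obtain ⟨L, hL⟩ := hLip (R + 1) (by positivity)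
  set τ : ℝ → ℝ := fun t => min (max t 0) T with hτdef
  set σ : ℝ → ℝ := fun y => min (max y 0) R with hσdef
  have hτmem : ∀ t, τ t ∈ Icc (0 : ℝ) T :=
    fun t => ⟨le_min (le_max_right _ _) hT.le, min_le_right _ _⟩
  have hτeq : ∀ t ∈ Icc (0 : ℝ) T, τ t = t := by
    intro t ht
    simp only [hτdef]
    rw [max_eq_left ht.1, min_eq_left ht.2]
  have hσmem : ∀ y, σ y ∈ Icc (0 : ℝ) R :=
    fun y => ⟨le_min (le_max_right _ _) hR0, min_le_right _ _⟩
  have hσeq : ∀ y ∈ Icc (0 : ℝ) R, σ y = y := by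
    intro y hy
    simp only [hσdef]
    rw [max_eq_left hy.1, min_eq_left hy.2]
  have hτcont : Continuous τ := (continuous_id.max continuous_const).min continuous_const
  have hσcont : Continuous σ := (continuous_id.max continuous_const).min continuous_const
  have hσlip : ∀ y w : ℝ, |σ y - σ w| ≤ |y - w| := by
    intro y w
    refine (abs_min_sub_min_le_max _ _ _ _).trans (max_le ?_ ?_)
    · exact abs_max_sub_max_le_abs _ _ _
    · simp [abs_nonneg]
  set g : ℝ → ℝ → ℝ :=
    fun t y => κ ^ 2 * (B (τ t)) ^ 2 * (f (τ t) (σ y)) ^ 2 / (D (τ t)) ^ 2 with hgdef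
  have hDsq : ∀ t ∈ Icc (0 : ℝ) T, d ^ 2 ≤ (D t) ^ 2 := by
    intro t ht
    have h1 := hd t ht
    nlinarith [abs_nonneg (D t), sq_abs (D t)]
  have hDne : ∀ t ∈ Icc (0 : ℝ) T, (D t) ^ 2 ≠ 0 := by
    intro t ht
    have := (hDsq t ht)
    nlinarith [pow_pos hd0 2]
  have hD0 : ∀ t ∈ Icc (0 : ℝ) T, D t ≠ 0 := by
    intro t ht h
    exact hDne t ht (by rw [h]; ring)
  have hBsq : ∀ t ∈ Icc (0 : ℝ) T, (B t) ^ 2 ≤ Mb ^ 2 := by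
    intro t ht
    have := hMb t ht
    rw [Real.norm_eq_abs] at this
    nlinarith [abs_nonneg (B t), sq_abs (B t)]
  have hfsq : ∀ t ∈ Icc (0 : ℝ) T, ∀ y ≥ (0 : ℝ), (f t y) ^ 2 ≤ M ^ 2 := by
    intro t ht y hy
    have h1 := hfpos t ht y hy
    have h2 := hM t ht y hy
    nlinarith
  -- the key pointwise bound
  have hbnd : ∀ t ∈ Icc (0 : ℝ) T, ∀ y ≥ (0 : ℝ),
      κ ^ 2 * (B t) ^ 2 * (f t y) ^ 2 / (D t) ^ 2 ≤ C := by
    intro t ht y hy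
    rw [hCdef]
    have h1 := hBsq t ht
    have h2 := hfsq t ht y hy
    have h3 := hDsq t ht
    gcongr
  have hgle : ∀ t y, g t y ≤ C := by
    intro t y
    exact hbnd (τ t) (hτmem t) (σ y) (hσmem y).1
  have hgnn : ∀ t y, 0 ≤ g t y := by
    intro t y
    have := hDsq (τ t) (hτmem t)
    positivity
  set K0 : ℝ := κ ^ 2 * Mb ^ 2 / d ^ 2 * max L 0 with hK0def
  have hK00 : 0 ≤ K0 := mul_nonneg (by positivity) (le_max_right L 0)
  have hglip : ∀ t y w, |g t y - g t w| ≤ K0 * |y - w| := by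
    intro t y w
    have hD2 : (D (τ t)) ^ 2 ≠ 0 := hDne _ (hτmem t)
    have key : g t y - g t w =
        κ ^ 2 * (B (τ t)) ^ 2 / (D (τ t)) ^ 2 *
          ((f (τ t) (σ y)) ^ 2 - (f (τ t) (σ w)) ^ 2) := by
      simp only [hgdef]; field_simp
    have hfl := hL (τ t) (hτmem t) (σ y)
      ⟨(hσmem y).1, (hσmem y).2.trans (by linarith)⟩ (σ w)
      ⟨(hσmem w).1, (hσmem w).2.trans (by linarith)⟩
    have hΔ : |(f (τ t) (σ y)) ^ 2 - (f (τ t) (σ w)) ^ 2| ≤ max L 0 * |y - w| := by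
      refine hfl.trans ?_
      have h1 := hσlip y w
      have h2 : L ≤ max L 0 := le_max_left _ _
      have h3 : (0 : ℝ) ≤ max L 0 := le_max_right _ _
      nlinarith [abs_nonneg (σ y - σ w), abs_nonneg (y - w)]
    have hc : |κ ^ 2 * (B (τ t)) ^ 2 / (D (τ t)) ^ 2| ≤ κ ^ 2 * Mb ^ 2 / d ^ 2 := by
      rw [abs_of_nonneg (by positivity)]
      have h1 := hBsq (τ t) (hτmem t)
      have h3 := hDsq (τ t) (hτmem t)
      exact div_le_div₀ (by positivity)
        (mul_le_mul_of_nonneg_left h1 (pow_pos hκ 2).le) (pow_pos hd0 2) h3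
    calc |g t y - g t w|
        = |κ ^ 2 * (B (τ t)) ^ 2 / (D (τ t)) ^ 2| *
            |(f (τ t) (σ y)) ^ 2 - (f (τ t) (σ w)) ^ 2| := by rw [key, abs_mul]
      _ ≤ κ ^ 2 * Mb ^ 2 / d ^ 2 * (max L 0 * |y - w|) := by
          apply mul_le_mul hc hΔ (abs_nonneg _) (by positivity)
      _ = K0 * |y - w| := by rw [hK0def]; ring
  have hvlip : ∀ t, LipschitzWith K0.toNNReal (fun x => -(g t x)) := by
    intro t
    apply LipschitzWith.of_dist_le_mul
    intro x w
    rw [Real.dist_eq, Real.dist_eq, Real.coe_toNNReal _ hK00]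
    have h1 := hglip t x w
    calc |-(g t x) - -(g t w)| = |g t x - g t w| := by rw [abs_sub_comm]; ring_nf
      _ ≤ K0 * |x - w| := h1
  have hBτ : Continuous fun t => B (τ t) := hB.comp_continuous hτcont hτmem
  have hDτ : Continuous fun t => D (τ t) := hD.comp_continuous hτcont hτmem
  have hfτσ : Continuous fun p : ℝ × ℝ => f (τ p.1) (σ p.2) := by
    have hmap : Continuous fun p : ℝ × ℝ => (τ p.1, σ p.2) :=
      (hτcont.comp continuous_fst).prodMk (hσcont.comp continuous_snd)
    exact hfcont.comp_continuous hmap fun p => ⟨hτmem _, (hσmem _).1⟩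
  have hgcont : Continuous fun p : ℝ × ℝ => g p.1 p.2 := by
    apply Continuous.div
    · exact (continuous_const.mul ((hBτ.comp continuous_fst).pow 2)).mul (hfτσ.pow 2)
    · exact (hDτ.comp continuous_fst).pow 2
    · exact fun p => hDne _ (hτmem p.1)
  -- Picard–Lindelöf
  have hPL : IsPicardLindelof (fun t y => -(g t y)) (tmin := 0) (tmax := T)
      ⟨T, hT.le, le_rfl⟩ 0 R.toNNReal 0 C.toNNReal K0.toNNReal :=
    { lipschitzOnWith := fun t _ => (hvlip t).lipschitzOnWith
      continuousOn := fun x _ =>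
        ((hgcont.comp (continuous_id.prodMk continuous_const)).neg).continuousOn
      norm_le := fun t _ x _ => by
        rw [Real.norm_eq_abs, abs_neg, abs_of_nonneg (hgnn t x), Real.coe_toNNReal _ hC0]
        exact hgle t x
      mul_max_le := by
        show (C.toNNReal : ℝ) * max (T - T) (T - 0) ≤ (R.toNNReal : ℝ) - ((0 : NNReal) : ℝ)
        rw [Real.coe_toNNReal _ hC0, Real.coe_toNNReal _ hR0, NNReal.coe_zero,
          sub_self, sub_zero, sub_zero, max_eq_right hT.le] }
  obtain ⟨y, hyT', hyD⟩ := hPL.exists_eq_forall_mem_Icc_hasDerivWithinAt₀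
  have hyT : y T = 0 := hyT'
  have hycont : ContinuousOn y (Icc 0 T) := fun t ht => (hyD t ht).continuousWithinAt
  have hgycont : ContinuousOn (fun s => g s (y s)) (Icc 0 T) := by
    have h1 : ContinuousOn (fun s : ℝ => ((s, y s) : ℝ × ℝ)) (Icc 0 T) :=
      (continuous_id.continuousOn).prodMk hycont
    have h2 := hgcont.comp_continuousOn h1
    exact h2
  have hgyint : ∀ t ∈ Icc (0 : ℝ) T, IntervalIntegrable (fun s => g s (y s))
      MeasureTheory.volume t T := by
    intro t ht
    apply ContinuousOn.intervalIntegrable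
    rw [uIcc_of_le ht.2]
    exact hgycont.mono (Icc_subset_Icc ht.1 le_rfl)
  have hyint : ∀ t ∈ Icc (0 : ℝ) T, y t = ∫ s in t..T, g s (y s) := by
    intro t ht
    rcases eq_or_lt_of_le ht.2 with h | h
    · rw [h]
      simp [hyT]
    · have hFTC := intervalIntegral.integral_eq_sub_of_hasDeriv_right_of_le
        (f' := fun s => -(g s (y s))) ht.2
        (hycont.mono (Icc_subset_Icc ht.1 le_rfl))
        (fun x hx => by
          have hx' : x ∈ Icc (0 : ℝ) T := ⟨ht.1.trans hx.1.le, hx.2.le⟩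
          exact ((hyD x hx').hasDerivAt
            (Icc_mem_nhds (lt_of_le_of_lt ht.1 hx.1) hx.2)).hasDerivWithinAt)
        ((hgyint t ht).neg)
      rw [hyT] at hFTC
      rw [intervalIntegral.integral_neg] at hFTC
      linarith
  have hynn : ∀ t ∈ Icc (0 : ℝ) T, 0 ≤ y t := by
    intro t ht
    rw [hyint t ht]
    exact intervalIntegral.integral_nonneg ht.2 fun s _ => hgnn s (y s)
  have hyle : ∀ t ∈ Icc (0 : ℝ) T, y t ≤ R := by
    intro t ht
    rw [hyint t ht]
    calc (∫ s in t..T, g s (y s)) ≤ ∫ _s in t..T, C :=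
          intervalIntegral.integral_mono_on ht.2 (hgyint t ht) intervalIntegrable_const
            fun s _ => hgle s (y s)
      _ = (T - t) * C := by simp [smul_eq_mul]
      _ ≤ R := by rw [hRdef]; nlinarith [ht.1]
  have hgyval : ∀ s ∈ Icc (0 : ℝ) T,
      g s (y s) = κ ^ 2 * (B s) ^ 2 * (f s (y s)) ^ 2 / (D s) ^ 2 := by
    intro s hs
    simp only [hgdef]
    rw [hτeq s hs, hσeq _ ⟨hynn s hs, hyle s hs⟩]
  -- define β
  refine ⟨fun t => κ * B t * f t (y t) / (D t) ^ 2, ⟨?_, ?_⟩, ?_⟩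
  · -- continuity of β
    have hfy : ContinuousOn (fun t => f t (y t)) (Icc 0 T) :=
      hfcont.comp (continuousOn_id.prodMk hycont) fun t ht => ⟨ht, hynn t ht⟩
    exact ((continuousOn_const.mul hB).mul hfy).div (hD.pow 2) fun t ht => hDne t ht
  · -- β satisfies the equation
    intro t ht
    have hq : ∀ s ∈ Icc (0 : ℝ) T,
        (D s * (κ * B s * f s (y s) / (D s) ^ 2)) ^ 2 = g s (y s) := by
      intro s hs
      rw [hgyval s hs]
      have h3 : D s ≠ 0 := hD0 s hs
      field_simp
    have hInt : (∫ s in t..T, (D s * (κ * B s * f s (y s) / (D s) ^ 2)) ^ 2) = y t := by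
      rw [hyint t ht]
      apply intervalIntegral.integral_congr
      intro s hs
      rw [uIcc_of_le ht.2] at hs
      exact hq s ⟨ht.1.trans hs.1, hs.2⟩
    rw [hInt]
    have h3 : (D t) ^ 2 ≠ 0 := hDne t ht
    have h3' : D t ≠ 0 := hD0 t ht
    field_simp
  · -- uniqueness
    rintro β' ⟨hcont', heq'⟩
    set h' : ℝ → ℝ := fun s => (D (τ s) * β' (τ s)) ^ 2 with hhdef
    have hhcont : Continuous h' :=
      (hDτ.mul (hcont'.comp_continuous hτcont hτmem)).pow 2
    set z : ℝ → ℝ := fun t => ∫ s in t..T, h' s with hzdef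
    have hzeq : ∀ t ∈ Icc (0 : ℝ) T, z t = ∫ s in t..T, (D s * β' s) ^ 2 := by
      intro t ht
      apply intervalIntegral.integral_congr
      intro s hs
      rw [uIcc_of_le ht.2] at hs
      have hts : τ s = s := hτeq s ⟨ht.1.trans hs.1, hs.2⟩
      simp only [hhdef, hts]
    have hznn : ∀ t ∈ Icc (0 : ℝ) T, 0 ≤ z t := fun t ht =>
      intervalIntegral.integral_nonneg ht.2 fun s _ => sq_nonneg _
    have heq2 : ∀ t ∈ Icc (0 : ℝ) T, (D t) ^ 2 * β' t = κ * B t * f t (z t) := by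
      intro t ht
      rw [hzeq t ht]
      exact heq' t ht
    have hhval : ∀ t ∈ Icc (0 : ℝ) T,
        h' t = κ ^ 2 * (B t) ^ 2 * (f t (z t)) ^ 2 / (D t) ^ 2 := by
      intro t ht
      have h1 : τ t = t := hτeq t ht
      have h4 := heq2 t ht
      have key : (D t * β' t) ^ 2 * (D t) ^ 2 = (κ * B t * f t (z t)) ^ 2 := by
        rw [← h4]; ring
      simp only [hhdef, h1]
      rw [eq_div_iff (hDne t ht), key]
      ring
    have hhle : ∀ t ∈ Icc (0 : ℝ) T, h' t ≤ C := by
      intro t ht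
      rw [hhval t ht]
      exact hbnd t ht (z t) (hznn t ht)
    have hzle : ∀ t ∈ Icc (0 : ℝ) T, z t ≤ R := by
      intro t ht
      calc z t ≤ ∫ _s in t..T, C := by
            apply intervalIntegral.integral_mono_on ht.2 (hhcont.intervalIntegrable t T)
              intervalIntegrable_const
            intro s hs
            exact hhle s ⟨ht.1.trans hs.1, hs.2⟩
        _ = (T - t) * C := by simp [smul_eq_mul]
        _ ≤ R := by rw [hRdef]; nlinarith [ht.1]
    have hzderiv : ∀ t, HasDerivAt z (-(h' t)) t := by
      intro t
      have h1 : z = fun u => (∫ s in (0:ℝ)..T, h' s) - ∫ s in (0:ℝ)..u, h' s := by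
        funext u
        rw [hzdef, eq_sub_iff_add_eq, add_comm]
        exact intervalIntegral.integral_add_adjacent_intervals
          (hhcont.intervalIntegrable 0 u) (hhcont.intervalIntegrable u T)
      have h2 : HasDerivAt (fun u => ∫ s in (0:ℝ)..u, h' s) (h' t) t :=
        intervalIntegral.integral_hasDerivAt_right (hhcont.intervalIntegrable 0 t)
          (hhcont.stronglyMeasurable.stronglyMeasurableAtFilter) hhcont.continuousAt
      rw [h1]
      exact ((hasDerivAt_const t (∫ s in (0:ℝ)..T, h' s)).sub h2).congr_deriv (by ring)
    have hzcont : ContinuousOn z (Icc 0 T) :=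
      (continuous_iff_continuousAt.2 fun t => (hzderiv t).continuousAt).continuousOn
    have hzT : z T = 0 := by simp [hzdef]
    have hgz : ∀ t ∈ Icc (0 : ℝ) T, g t (z t) = h' t := by
      intro t ht
      rw [hhval t ht]
      simp only [hgdef]
      rw [hτeq t ht, hσeq _ ⟨hznn t ht, hzle t ht⟩]
    have huniq : EqOn y z (Icc 0 T) := by
      apply ODE_solution_unique_of_mem_Icc_left
        (v := fun t x => -(g t x)) (s := fun _ => (univ : Set ℝ))
        (fun t _ => (hvlip t).lipschitzOnWith) hycont ?_ (fun _ _ => mem_univ _)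
        hzcont ?_ (fun _ _ => mem_univ _) (by rw [hyT, hzT])
      · intro t ht
        apply (hyD t ⟨ht.1.le, ht.2⟩).mono_of_mem_nhdsWithin
        rw [mem_nhdsWithin]
        exact ⟨Ioi 0, isOpen_Ioi, ht.1, fun x hx => ⟨hx.1.le, hx.2.trans ht.2⟩⟩
      · intro t ht
        have ht' : t ∈ Icc (0 : ℝ) T := ⟨ht.1.le, ht.2⟩
        have := (hzderiv t).hasDerivWithinAt (s := Iic t)
        rwa [← hgz t ht'] at this
    intro t ht
    have h4 := heq2 t ht
    have h6 : y t = z t := huniq ht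
    show κ * B t * f t (y t) / (D t) ^ 2 = β' t
    rw [h6, div_eq_iff (hDne t ht)]
    linear_combination h4.symm
end

section
/- Let y : [0,T] → [0,∞) be differentiable with y_T = 0 and suppose θ'_t = y'_t (κ₂ + (1/2) κ₄ y_t)² on [0,T], where θ_t := ∫_t^T |B_s/D_s|² ds, κ₂, κ₄ ≥ 0, κ₂³ + (3/2)κ₄ θ_t > 0. Then κ₂ + (1/2) κ₄ y_t = (κ₂³ + (3/2) κ₄ θ_t)^{1/3} for all t ∈ [0,T]. -/
open Set

/-- If `θ_t = ∫_t^T |B_s/D_s|² ds` and `θ'_t = y'_t (κ₂ + (1/2)κ₄ y_t)²` on `[0,T]`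
with `y_T = 0`, `y ≥ 0`, `κ₂, κ₄ ≥ 0` and `κ₂³ + (3/2)κ₄ θ_t > 0`, then
`κ₂ + (1/2)κ₄ y_t = (κ₂³ + (3/2)κ₄ θ_t)^{1/3}` on `[0,T]`. -/
theorem stmt4 (T : ℝ) (hT : 0 < T) (B D : ℝ → ℝ)
    (hB : Continuous B) (hD : Continuous D) (hD0 : ∀ t, D t ≠ 0)
    (κ2 κ4 : ℝ) (hκ2 : 0 ≤ κ2) (hκ4 : 0 ≤ κ4)
    (y y' : ℝ → ℝ) (hy'c : Continuous y')
    (hy : ∀ t, HasDerivAt y (y' t) t) (hyT : y T = 0)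
    (hynn : ∀ t ∈ Icc 0 T, 0 ≤ y t)
    (θ : ℝ → ℝ) (hθ : θ = fun t => ∫ s in t..T, (B s / D s) ^ 2)
    (hode : ∀ t ∈ Icc 0 T, deriv θ t = y' t * (κ2 + κ4 / 2 * y t) ^ 2)
    (hpos : ∀ t ∈ Icc 0 T, 0 < κ2 ^ 3 + 3 / 2 * κ4 * θ t) :
    ∀ t ∈ Icc 0 T, κ2 + κ4 / 2 * y t = (κ2 ^ 3 + 3 / 2 * κ4 * θ t) ^ ((1 : ℝ) / 3) := by
  set f : ℝ → ℝ := fun s => (B s / D s) ^ 2 with hf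
  have hfc : Continuous f := (hB.div hD hD0).pow 2
  -- θ has derivative -(f t) at any t
  have hθd : ∀ t : ℝ, HasDerivAt θ (-(f t)) t := by
    intro t
    have h1 : HasDerivAt (fun u => ∫ s in T..u, f s) (f t) t :=
      intervalIntegral.integral_hasDerivAt_right (hfc.intervalIntegrable _ _)
        (hfc.stronglyMeasurableAtFilter _ _) hfc.continuousAt
    have h2 : θ = fun u => -(∫ s in T..u, f s) := by
      funext u
      rw [hθ]
      exact intervalIntegral.integral_symm T u
    rw [h2]
    exact h1.neg
  -- the function F
  set F : ℝ → ℝ := fun t => (κ2 + κ4 / 2 * y t) ^ 3 - 3 / 2 * κ4 * θ t with hF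
  have hFd : ∀ x ∈ Icc 0 T, HasDerivAt F 0 x := by
    intro x hx
    have hdy : HasDerivAt (fun t => (κ2 + κ4 / 2 * y t) ^ 3)
        (3 * (κ2 + κ4 / 2 * y x) ^ 2 * (κ4 / 2 * y' x)) x := by
      have := (((hy x).const_mul (κ4 / 2)).const_add κ2).fun_pow 3
      simpa using this
    have hθx : HasDerivAt θ (deriv θ x) x := by
      rw [(hθd x).deriv]; exact hθd x
    have := hdy.sub ((hθx).const_mul (3 / 2 * κ4))
    have hz : 3 * (κ2 + κ4 / 2 * y x) ^ 2 * (κ4 / 2 * y' x)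
        - 3 / 2 * κ4 * deriv θ x = 0 := by
      rw [hode x hx]; ring
    rwa [hz] at this
  -- F is constant on [0,T], equal to F T = κ2^3
  have hθT : θ T = 0 := by rw [hθ]; simp
  have hFT : F T = κ2 ^ 3 := by simp [hF, hyT, hθT]
  have hFconst : ∀ t ∈ Icc 0 T, F t = κ2 ^ 3 := by
    intro t ht
    have key : ∀ x ∈ Icc t T, F x = F t := by
      apply constant_of_has_deriv_right_zero
      · intro x hx
        exact ((hFd x ⟨le_trans ht.1 hx.1, hx.2⟩)).continuousAt.continuousWithinAt
      · intro x hx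
        exact (hFd x ⟨le_trans ht.1 hx.1, le_of_lt hx.2⟩).hasDerivWithinAt
    have := key T ⟨ht.2, le_refl T⟩
    rw [hFT] at this
    exact this.symm
  -- conclude via cube roots
  intro t ht
  have hb : 0 ≤ κ2 + κ4 / 2 * y t := by
    have := hynn t ht
    positivity
  have hcube : (κ2 + κ4 / 2 * y t) ^ 3 = κ2 ^ 3 + 3 / 2 * κ4 * θ t := by
    have := hFconst t ht
    simp only [hF] at this
    linarith
  rw [← hcube]
  rw [← Real.rpow_natCast (κ2 + κ4 / 2 * y t) 3, ← Real.rpow_mul hb]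
  norm_num
end

section
/- Let ψ(t, z₂, …, zₙ) = -(κ₂/2) z₂ + ∑_{j=3}^n (-1)^{j+1} (κ_j/j!) z_j / z₂^{j/2} with κ₂ > 0, and let α_j(y) = (j-1)!! y^{j/2} for even j and 0 for odd j. Then for every y > 0, ∑_{1 ≤ j ≤ n/2} 2j(2j-1) α_{2j-2}(y) ψ_{z_{2j}}(t, α₂(y), …, αₙ(y)) = -κ₂; that is, the standardized-moment correction terms cancel exactly, leaving only the variance coefficient. -/
open Finset
open Fin.NatCast

/-- For the mean-variance-standardized-moments preference
`ψ(t,z₂,…,zₙ) = -(κ₂/2)z₂ + ∑_{j=3}^n (-1)^{j+1}(κ_j/j!) z_j/z₂^{j/2}`, evaluated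
at the Gaussian central moments `α_j(y) = (j-1)!! y^{j/2}` (even `j`; `0` for odd
`j`), the weighted derivative sum collapses:
`∑_{1≤j≤n/2} 2j(2j-1) α_{2j-2}(y) ψ_{z_{2j}}(α(y)) = -κ₂` for every `y > 0`. -/
theorem stmt18 (n : ℕ) (hn : 2 ≤ n) (κ : ℕ → ℝ) (hκ2 : 0 < κ 2)
    (ψ : (Fin (n + 1) → ℝ) → ℝ)
    (hψ : ∀ z : Fin (n + 1) → ℝ, ψ z = -(κ 2 / 2) * z 2 +
        ∑ j ∈ Icc 3 n, (-1 : ℝ) ^ (j + 1) * (κ j / (Nat.factorial j : ℝ)) *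
          z ((j : ℕ) : Fin (n + 1)) / (z 2) ^ ((j : ℝ) / 2))
    (y : ℝ) (hy : 0 < y)
    (α : ℕ → ℝ)
    (hα : ∀ j, α j = if Even j then (Nat.doubleFactorial (j - 1) : ℝ) * y ^ (j / 2) else 0) :
    ∑ j ∈ Icc 1 (n / 2), (2 * j : ℝ) * (2 * (j : ℝ) - 1) * α (2 * j - 2) *
        (fderiv ℝ ψ (fun k => α (k : ℕ)) (Pi.single ((2 * j : ℕ) : Fin (n + 1)) 1))
      = -(κ 2) := by
  have hval : ∀ m : ℕ, m ≤ n → (((m : ℕ) : Fin (n+1)) : ℕ) = m := fun m hm =>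
    Fin.val_cast_of_lt (by omega)
  have h2fin : (2 : Fin (n+1)) = ((2:ℕ) : Fin (n+1)) := by norm_num
  have h2val : ((2 : Fin (n+1)) : ℕ) = 2 := by rw [h2fin, hval 2 hn]
  set a : Fin (n+1) → ℝ := fun k => α (k : ℕ) with haa
  have ha2 : a 2 = y := by
    rw [haa]; simp only [h2val, hα]
    norm_num [Nat.doubleFactorial]
  set c : ℕ → ℝ := fun m => (-1 : ℝ) ^ (m + 1) * (κ m / (Nat.factorial m : ℝ)) with hcc
  set P : Fin (n+1) → ((Fin (n+1) → ℝ) →L[ℝ] ℝ) :=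
    fun i => ContinuousLinearMap.proj i with hPP
  set G : (Fin (n+1) → ℝ) → ℝ := fun z => -(κ 2 / 2) * z 2 +
      ∑ m ∈ Icc 3 n, (c m * z ((m : ℕ) : Fin (n + 1))) * (z 2) ^ (-((m : ℝ) / 2)) with hGG
  set L : (Fin (n+1) → ℝ) →L[ℝ] ℝ := (-(κ 2 / 2)) • P 2 +
      ∑ m ∈ Icc 3 n,
        ((c m * a ((m : ℕ) : Fin (n + 1))) • ((-((m : ℝ) / 2) * y ^ (-((m : ℝ) / 2) - 1)) • P 2)
          + (y ^ (-((m : ℝ) / 2))) • (c m • P ((m : ℕ) : Fin (n + 1)))) with hLL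
  -- ψ agrees with G near a
  have hopen : IsOpen {z : Fin (n+1) → ℝ | 0 < z 2} :=
    isOpen_lt continuous_const (continuous_apply 2)
  have hmem : {z : Fin (n+1) → ℝ | 0 < z 2} ∈ nhds a :=
    hopen.mem_nhds (by simp [ha2, hy])
  have heq : ψ =ᶠ[nhds a] G := by
    filter_upwards [hmem] with z hz
    rw [hψ z, hGG]
    congr 1
    refine Finset.sum_congr rfl fun m hm => ?_
    rw [Real.rpow_neg (le_of_lt hz), div_eq_mul_inv]
  -- derivative of G
  have hG : HasFDerivAt G L a := by
    have hproj : ∀ i : Fin (n+1), HasFDerivAt (fun z : Fin (n+1) → ℝ => z i) (P i) a :=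
      fun i => (ContinuousLinearMap.proj i : (Fin (n+1) → ℝ) →L[ℝ] ℝ).hasFDerivAt
    refine HasFDerivAt.add ((hproj 2).const_mul _) (HasFDerivAt.fun_sum fun m hm => ?_)
    have h2 : (fun z : Fin (n+1) → ℝ => z 2) a ≠ 0 ∨ (1:ℝ) ≤ -((m : ℝ) / 2) := by
      left; simpa [ha2] using hy.ne'
    have hr := (hproj 2).rpow_const h2
    have hu := (hproj (((m : ℕ) : Fin (n + 1)))).const_mul (c m)
    refine (hu.mul hr).congr_fderiv ?_
    simp [ha2, smul_smul, mul_comm]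
    exact (neg_smul _ _).symm
  have hfd : fderiv ℝ ψ a = L := by
    rw [heq.fderiv_eq]; exact hG.fderiv
  simp only [hfd]
  -- evaluate L on the basis directions
  have hLeval : ∀ v : Fin (n+1) → ℝ, L v = -(κ 2 / 2) * v 2 +
      ∑ m ∈ Icc 3 n,
        (c m * a ((m : ℕ) : Fin (n + 1)) * (-((m : ℝ) / 2) * y ^ (-((m : ℝ) / 2) - 1)) * v 2
          + y ^ (-((m : ℝ) / 2)) * (c m * v ((m : ℕ) : Fin (n + 1)))) := by
    intro v
    rw [hLL]
    simp [hPP, ContinuousLinearMap.sum_apply, ContinuousLinearMap.proj_apply, mul_assoc]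
  have hy' : y ≠ 0 := hy.ne'
  -- D j for 2 ≤ j
  have hDj : ∀ j, 2 ≤ j → j ≤ n / 2 →
      L (Pi.single ((2*j : ℕ) : Fin (n+1)) 1) = y ^ (-(j:ℝ)) * c (2*j) := by
    intro j hj2 hjn
    have h2jn : 2*j ≤ n := by omega
    set v : Fin (n+1) → ℝ := Pi.single ((2*j:ℕ):Fin (n+1)) (1:ℝ) with hvv
    rw [hLeval]
    have hne2 : ¬ ((2 : Fin (n+1)) = ((2*j : ℕ) : Fin (n+1))) := by
      intro h
      have := congrArg Fin.val h
      rw [h2val, hval _ h2jn] at this; omega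
    have hv2 : v 2 = 0 := by
      rw [hvv, Pi.single_apply, if_neg hne2]
    rw [Finset.sum_eq_single (2*j)]
    · rw [hv2]
      have hvm : v ((2*j:ℕ):Fin (n+1)) = 1 := by
        rw [hvv]; simp
      rw [hvm]
      have hcast : (((2*j : ℕ)):ℝ) = 2*(j:ℝ) := by push_cast; ring
      rw [hcast]
      have : -(2*(j:ℝ)/2) = -(j:ℝ) := by ring
      rw [this]; ring
    · intro m hm hmne
      obtain ⟨hm3, hmn⟩ := mem_Icc.mp hm
      have hvm : v ((m:ℕ):Fin (n+1)) = 0 := by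
        rw [hvv, Pi.single_apply, if_neg]
        intro h
        have := congrArg Fin.val h
        rw [hval _ hmn, hval _ h2jn] at this; omega
      rw [hv2, hvm]; ring
    · intro h
      exact absurd (mem_Icc.mpr ⟨by omega, h2jn⟩) h
  -- D 1
  have hD1 : L (Pi.single ((2*1 : ℕ) : Fin (n+1)) 1) =
      -(κ 2 / 2) + ∑ m ∈ Icc 3 n, c m * α m * (-((m:ℝ)/2) * y ^ (-((m:ℝ)/2) - 1)) := by
    set v : Fin (n+1) → ℝ := Pi.single ((2*1:ℕ):Fin (n+1)) (1:ℝ) with hvv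
    rw [hLeval]
    have hi : ((2*1 : ℕ) : Fin (n+1)) = (2 : Fin (n+1)) := by
      rw [h2fin]
    have hv2 : v 2 = 1 := by
      rw [hvv, hi]; simp
    rw [hv2, mul_one]
    congr 1
    refine Finset.sum_congr rfl fun m hm => ?_
    obtain ⟨hm3, hmn⟩ := mem_Icc.mp hm
    have hvm : v ((m:ℕ):Fin (n+1)) = 0 := by
      rw [hvv, hi, Pi.single_apply, if_neg]
      intro h
      have := congrArg Fin.val h
      rw [hval _ hmn, h2val] at this; omega
    rw [hvm]
    have ham : a ((m:ℕ):Fin (n+1)) = α m := by rw [haa]; simp [hval _ hmn]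
    rw [ham]; ring
  set T : ℕ → ℝ := fun m => c m * α m * (-((m:ℝ)/2) * y ^ (-((m:ℝ)/2) - 1)) with hTT
  -- split off j = 1
  have hsplit : Icc 1 (n/2) = insert 1 (Icc 2 (n/2)) := by
    ext x; simp only [mem_Icc, mem_insert]; omega
  have h1notin : (1:ℕ) ∉ Icc 2 (n/2) := by simp
  rw [hsplit, Finset.sum_insert h1notin]
  have hα0 : α (2*1-2) = 1 := by
    rw [hα]; norm_num [Nat.doubleFactorial]
  rw [Finset.sum_congr (rfl : Icc 2 (n/2) = Icc 2 (n/2)) (fun j hj => by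
      obtain ⟨hj2, hjn⟩ := mem_Icc.mp hj
      rw [hDj j hj2 hjn])]
  rw [hα0, hD1]
  -- reindex the even part
  have hTodd : ∀ m ∈ Icc 3 n, T m ≠ 0 → Even m := by
    intro m hm hne
    by_contra ho
    exact hne (by rw [hTT]; simp only [hα, if_neg ho]; ring)
  have hfil := Finset.sum_filter_of_ne hTodd
  have himg : (Icc 3 n).filter (fun m => Even m) = (Icc 2 (n/2)).image (fun j => 2*j) := by
    ext m
    simp only [mem_filter, mem_Icc, mem_image, Nat.even_iff]
    constructor
    · rintro ⟨⟨h3, hmn⟩, he⟩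
      exact ⟨m/2, ⟨by omega, by omega⟩, by omega⟩
    · rintro ⟨j, ⟨hj2, hjn⟩, rfl⟩
      exact ⟨⟨by omega, by omega⟩, by omega⟩
  have hinj : ∀ x ∈ Icc 2 (n/2), ∀ z ∈ Icc 2 (n/2), 2*x = 2*z → x = z :=
    fun x _ z _ h => by omega
  have hre : ∑ m ∈ Icc 3 n, T m = ∑ j ∈ Icc 2 (n/2), T (2*j) := by
    rw [← hfil, himg, Finset.sum_image hinj]
  rw [hre]
  -- per-term cancellation
  have key : ∀ j ∈ Icc 2 (n/2), 2 * T (2*j) +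
      2*(j:ℝ)*(2*(j:ℝ)-1)*α (2*j-2) * (y^(-(j:ℝ)) * c (2*j)) = 0 := by
    intro j hj
    obtain ⟨hj2, hjn⟩ := mem_Icc.mp hj
    have h3 : (3:ℕ) ≤ 2*j := by omega
    have e1 : α (2*j) = ((2*j-1).doubleFactorial : ℝ) * y ^ j := by
      rw [hα, if_pos (even_two_mul j), Nat.mul_div_cancel_left j (by norm_num)]
    have h22 : 2*j-2 = 2*(j-1) := by omega
    have e2 : α (2*j-2) = ((2*j-3).doubleFactorial : ℝ) * y ^ (j-1) := by
      rw [h22, hα, if_pos (even_two_mul _), Nat.mul_div_cancel_left _ (by norm_num)]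
      have hx : 2*(j-1)-1 = 2*j-3 := by omega
      rw [hx]
    have e3 : ((2*j-1).doubleFactorial : ℝ) = (2*(j:ℝ)-1) * ((2*j-3).doubleFactorial : ℝ) := by
      have h : 2*j-1 = (2*j-3)+2 := by omega
      rw [h, Nat.doubleFactorial_add_two]
      push_cast [Nat.cast_sub h3]
      ring
    have hcast : ((2*j : ℕ) : ℝ) = 2*(j:ℝ) := by push_cast; ring
    have p1 : (y : ℝ) ^ (j:ℕ) * y ^ (-(j:ℝ) - 1) = y⁻¹ := by
      rw [← Real.rpow_natCast y j, ← Real.rpow_add hy]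
      rw [show (j:ℝ) + (-(j:ℝ) - 1) = -1 by ring, Real.rpow_neg_one]
    have p2 : (y : ℝ) ^ ((j-1:ℕ)) * y ^ (-(j:ℝ)) = y⁻¹ := by
      rw [← Real.rpow_natCast y (j-1), ← Real.rpow_add hy]
      rw [show ((j-1:ℕ):ℝ) + (-(j:ℝ)) = -1 by
        rw [Nat.cast_sub (by omega : 1 ≤ j)]; push_cast; ring, Real.rpow_neg_one]
    rw [hTT]
    simp only
    rw [e1, e2, e3, hcast]
    rw [show -(2*(j:ℝ)/2) - 1 = -(j:ℝ) - 1 by ring, show -(2*(j:ℝ)/2) = -(j:ℝ) by ring]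
    linear_combination (-2*(j:ℝ)*(2*(j:ℝ)-1) * c (2*j) * ((2*j-3).doubleFactorial : ℝ)) * p1
      + (2*(j:ℝ)*(2*(j:ℝ)-1) * c (2*j) * ((2*j-3).doubleFactorial : ℝ)) * p2
  have hsum0 : ∑ j ∈ Icc 2 (n/2), (2 * T (2*j) +
      2*(j:ℝ)*(2*(j:ℝ)-1)*α (2*j-2) * (y^(-(j:ℝ)) * c (2*j))) = 0 :=
    Finset.sum_eq_zero key
  rw [Finset.sum_add_distrib, ← Finset.mul_sum] at hsum0
  push_cast
  linarith [hsum0]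
end
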